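/- For ordinals α < β ≤ ε₀, if α <_k β (i.e., one can descend from β to α by repeatedly taking the k-th member of the fundamental sequence) and k ≤ n, then α <_n β. -/

import Mathlib

namespace SlowCon

open ONote

/-- Fast-growing hierarchy with `F_{α+1}(n) = F_α^[n+1](n)`, standard fundamental sequences. -/
def F : ONote → ℕ → ℕ
  | o =>
    match fundamentalSequence o, fundamentalSequence_has_prop o with
    | Sum.inl none, _ => fun n => n + 1
    | Sum.inl (some a), h =>
      have : a < o := by rw [ONote.lt_def, h.1]; exact Order.lt_succ _
      fun n => (F a)^[n + 1] n
    | Sum.inr f, h => fun n =>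
      have : f n < o := (h.2.1 n).2.1
      F (f n) n
  termination_by o => o

/-- The `k`-th member of the fundamental sequence (predecessor at successors, `0` at `0`). -/
def fs (o : ONote) (k : ℕ) : ONote :=
  match fundamentalSequence o with
  | Sum.inl none => 0
  | Sum.inl (some a) => a
  | Sum.inr f => f k

/-- `stepDown k a b` : one can descend from `b` to `a` via `k`-th members of
fundamental sequences (at least one step). -/
def stepDown (k : ℕ) (a b : ONote) : Prop :=
  Relation.TransGen (fun x y => y ≠ 0 ∧ x = fs y k) a b

/-- Tower of ω's: `wtower 0 = 1`, `wtower (n+1) = ω ^ wtower n`. -/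
def wtower : ℕ → ONote
  | 0 => 1
  | n + 1 => ONote.oadd (wtower n) 1 0

/-- `F_{ε₀}(n) := F_{ω_{n+1}}(n)`. -/
def Feps (n : ℕ) : ℕ := F (wtower (n + 1)) n

/-- Ordinals `≤ ε₀`: `none` stands for `ε₀`, `some a` for `a < ε₀`. -/
def fsE : Option ONote → ℕ → Option ONote
  | none, k => some (wtower (k + 1))
  | some a, k => some (fs a k)

/-- Step-down relation on ordinals `≤ ε₀` (with `{ε₀}(k) = ω_{k+1}`). -/
def stepDownE (k : ℕ) (a b : Option ONote) : Prop :=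
  Relation.TransGen (fun x y => y ≠ some 0 ∧ x = fsE y k) a b

/-- Fast-growing hierarchy at indices `≤ ε₀`. -/
def FE : Option ONote → ℕ → ℕ
  | none, n => Feps n
  | some a, n => F a n

/-- Normal form for indices `≤ ε₀`. -/
def NFE : Option ONote → Prop
  | none => True
  | some a => a.NF

end SlowCon

namespace SlowCon

open ONote

/-- `iterRel G j x y` : `y` is obtained from `x` by `j` applications of the graph `G`. -/
def iterRel (G : ℕ → ℕ → Prop) : ℕ → ℕ → ℕ → Prop
  | 0, x, y => y = x
  | j + 1, x, y => ∃ z, iterRel G j x z ∧ G z y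

/-- Graph relation of the fast-growing hierarchy: `FRel α x y` means `F_α(x) = y`. -/
def FRel : ONote → ℕ → ℕ → Prop
  | o =>
    match fundamentalSequence o, fundamentalSequence_has_prop o with
    | Sum.inl none, _ => fun x y => y = x + 1
    | Sum.inl (some a), h =>
      have : a < o := by rw [ONote.lt_def, h.1]; exact Order.lt_succ _
      fun x y => iterRel (FRel a) (x + 1) x y
    | Sum.inr f, h => fun x y =>
      have : f x < o := (h.2.1 x).2.1
      FRel (f x) x y
  termination_by o => o

/-- Graph relation for indices `≤ ε₀`, with `F_{ε₀}(x) = F_{ω_{x+1}}(x)`. -/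
def FRelE : Option ONote → ℕ → ℕ → Prop
  | none, x, y => FRel (wtower (x + 1)) x y
  | some a, x, y => FRel a x y

/-- `OltE a b` : `a < b` among ordinals `≤ ε₀` (`none` = `ε₀`). -/
def OltE : Option ONote → Option ONote → Prop
  | some x, some y => x < y
  | some _, none => True
  | none, _ => False

/-- Finite levels of the fast-growing hierarchy. -/
def Ffin : ℕ → ℕ → ℕ
  | 0 => fun m => m + 1
  | k + 1 => fun m => (Ffin k)^[m + 1] m

/-- `tower x α = ω_x^α` : `x`-fold exponential tower over `α`. -/
def tower : ℕ → ONote → ONote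
  | 0, a => a
  | k + 1, a => ONote.oadd (tower k a) 1 0

/-- Progressiveness of a predicate on ordinal notations below ε₀. -/
def ProgO (Q : ONote → Prop) : Prop := ∀ a : ONote, (∀ b < a, Q b) → Q a

/-- Transfinite induction up to `α` for `Q`. -/
def TIO (α : ONote) (Q : ONote → Prop) : Prop := ProgO Q → ∀ β < α, Q β

open Classical in
/-- `FepsInv x` : the largest `z ≤ x` with `F_{ε₀}(z) ≤ x`, or `0` if there is none. -/
noncomputable def FepsInv (x : ℕ) : ℕ :=
  ((Finset.range (x + 1)).filter fun z => Feps z ≤ x).sup id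

end SlowCon

namespace SlowCon

open ONote



theorem fs_none {o : ONote} (h : fundamentalSequence o = Sum.inl none) (k : ℕ) : fs o k = 0 := by
  unfold fs; rw [h]

theorem fs_some {o a : ONote} (h : fundamentalSequence o = Sum.inl (some a)) (k : ℕ) : fs o k = a := by
  unfold fs; rw [h]

theorem fs_lim {o : ONote} {f : ℕ → ONote} (h : fundamentalSequence o = Sum.inr f) (k : ℕ) : fs o k = f k := by
  unfold fs; rw [h]

theorem eq_zero_of_fseq {o : ONote} (h : fundamentalSequence o = Sum.inl none) : o = 0 := by
  have := fundamentalSequence_has_prop o; rw [h] at this; exact this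

theorem fseq_zero : fundamentalSequence (0 : ONote) = Sum.inl none := rfl

theorem fseq_oadd (a : ONote) (m : ℕ+) (b : ONote) :
    fundamentalSequence (oadd a m b) =
      match fundamentalSequence b with
      | Sum.inr f => Sum.inr fun i => oadd a m (f i)
      | Sum.inl (some b') => Sum.inl (some (oadd a m b'))
      | Sum.inl none =>
        match fundamentalSequence a, m.natPred with
        | Sum.inl none, 0 => Sum.inl (some zero)
        | Sum.inl none, m + 1 => Sum.inl (some (oadd zero m.succPNat zero))
        | Sum.inl (some a'), 0 => Sum.inr fun i => oadd a' i.succPNat zero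
        | Sum.inl (some a'), m + 1 => Sum.inr fun i => oadd a m.succPNat (oadd a' i.succPNat zero)
        | Sum.inr f, 0 => Sum.inr fun i => oadd (f i) 1 zero
        | Sum.inr f, m + 1 => Sum.inr fun i => oadd a m.succPNat (oadd (f i) 1 zero) := by
  rw [fundamentalSequence]; rfl

theorem fs_oadd {b : ONote} (a : ONote) (m : ℕ+) (hb : b ≠ 0) (n : ℕ) :
    fs (oadd a m b) n = oadd a m (fs b n) := by
  rcases e : fundamentalSequence b with (_ | b') | f
  · exact absurd (eq_zero_of_fseq e) hb
  · rw [fs_some (by rw [fseq_oadd, e]), fs_some e]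
  · rw [fs_lim (f := fun i => oadd a m (f i)) (by rw [fseq_oadd, e]), fs_lim e]

theorem natPred_add_one' (j : ℕ+) : (j + 1 : ℕ+).natPred = j.natPred + 1 := by
  have h : ((j + 1 : ℕ+) : ℕ) = (j : ℕ) + 1 := rfl
  have h2 : 0 < (j : ℕ) := j.2
  show ((j + 1 : ℕ+) : ℕ) - 1 = ((j : ℕ) - 1) + 1
  rw [h]; omega

-- fs of oadd a m 0, m = 1 cases
theorem fs_oadd_one_none {a : ONote} (e : fundamentalSequence a = Sum.inl none) (n : ℕ) :
    fs (oadd a 1 0) n = 0 := by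
  rw [fs_some (by rw [fseq_oadd, fseq_zero, e]; rfl)]; rfl

theorem fs_oadd_one_some {a a' : ONote} (e : fundamentalSequence a = Sum.inl (some a')) (n : ℕ) :
    fs (oadd a 1 0) n = oadd a' n.succPNat 0 := by
  rw [fs_lim (f := fun i => oadd a' i.succPNat 0) (by rw [fseq_oadd, fseq_zero, e]; rfl)]

theorem fs_oadd_one_lim {a : ONote} {f : ℕ → ONote} (e : fundamentalSequence a = Sum.inr f) (n : ℕ) :
    fs (oadd a 1 0) n = oadd (f n) 1 0 := by
  rw [fs_lim (f := fun i => oadd (f i) 1 0) (by rw [fseq_oadd, fseq_zero, e]; rfl)]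

-- fs of oadd a (j+1) 0 cases
theorem fs_oadd_succ_none {a : ONote} (e : fundamentalSequence a = Sum.inl none) (j : ℕ+) (n : ℕ) :
    fs (oadd a (j + 1) 0) n = oadd 0 j 0 := by
  rw [fs_some (a := oadd 0 j 0) (by
    simp only [fseq_oadd, fseq_zero, e, natPred_add_one', PNat.succPNat_natPred]; rfl)]

theorem fs_oadd_succ_some {a a' : ONote} (e : fundamentalSequence a = Sum.inl (some a'))
    (j : ℕ+) (n : ℕ) :
    fs (oadd a (j + 1) 0) n = oadd a j (oadd a' n.succPNat 0) := by
  rw [fs_lim (f := fun i => oadd a j (oadd a' i.succPNat 0)) (by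
    simp only [fseq_oadd, fseq_zero, e, natPred_add_one', PNat.succPNat_natPred]; rfl)]

theorem fs_oadd_succ_lim {a : ONote} {f : ℕ → ONote} (e : fundamentalSequence a = Sum.inr f)
    (j : ℕ+) (n : ℕ) :
    fs (oadd a (j + 1) 0) n = oadd a j (oadd (f n) 1 0) := by
  rw [fs_lim (f := fun i => oadd a j (oadd (f i) 1 0)) (by
    simp only [fseq_oadd, fseq_zero, e, natPred_add_one', PNat.succPNat_natPred]; rfl)]

theorem oadd_ne_zero {a : ONote} {m : ℕ+} {b : ONote} : oadd a m b ≠ 0 :=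
  fun h => ONote.noConfusion h

theorem fs_lt {o : ONote} (h : o ≠ 0) (n : ℕ) : fs o n < o := by
  rcases e : fundamentalSequence o with (_ | a) | f
  · exact absurd (eq_zero_of_fseq e) h
  · have hp := fundamentalSequence_has_prop o; rw [e] at hp
    rw [fs_some e, ONote.lt_def, hp.1]; exact Order.lt_succ _
  · have hp := fundamentalSequence_has_prop o; rw [e] at hp
    rw [fs_lim e]; exact (hp.2.1 n).2.1

theorem onote_lt_wf : WellFounded ((· < ·) : ONote → ONote → Prop) := by
  have hs : Subrelation ((· < ·) : ONote → ONote → Prop)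
      (InvImage ((· < ·) : Ordinal → Ordinal → Prop) ONote.repr) :=
    fun h => ONote.lt_def.1 h
  exact Subrelation.wf hs (InvImage.wf _ Ordinal.lt_wf)

theorem stepDown_zero (n : ℕ) : ∀ o : ONote, o ≠ 0 → stepDown n 0 o := by
  intro o
  induction o using onote_lt_wf.induction with
  | _ o ih =>
    intro h
    by_cases hf : fs o n = 0
    · exact Relation.TransGen.single ⟨h, hf.symm⟩
    · exact Relation.TransGen.tail (ih _ (fs_lt h n) hf) ⟨h, rfl⟩

theorem stepDown_oadd (a : ONote) (m : ℕ+) (n : ℕ) {x y : ONote}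
    (h : stepDown n x y) : stepDown n (oadd a m x) (oadd a m y) :=
  Relation.TransGen.lift (oadd a m)
    (fun _ y' hy => ⟨oadd_ne_zero, by rw [hy.2, fs_oadd a m hy.1]⟩) _ _ h

theorem stepDown_coeff (n : ℕ) (a : ONote) (j : ℕ+) :
    stepDown n (oadd a j 0) (oadd a (j + 1) 0) := by
  rcases e : fundamentalSequence a with (_ | a') | f
  · have h0 := eq_zero_of_fseq e
    exact Relation.TransGen.single ⟨oadd_ne_zero, by rw [fs_oadd_succ_none e j n, h0]⟩
  · have h1 := stepDown_oadd a j n (stepDown_zero n (oadd a' n.succPNat 0) oadd_ne_zero)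
    exact Relation.TransGen.tail h1 ⟨oadd_ne_zero, (fs_oadd_succ_some e j n).symm⟩
  · have h1 := stepDown_oadd a j n (stepDown_zero n (oadd (f n) 1 0) oadd_ne_zero)
    exact Relation.TransGen.tail h1 ⟨oadd_ne_zero, (fs_oadd_succ_lim e j n).symm⟩

theorem stepDown_coeff_add (n : ℕ) (a : ONote) (j : ℕ+) :
    ∀ d : ℕ, stepDown n (oadd a j 0) (oadd a (j + d.succPNat) 0)
  | 0 => stepDown_coeff n a j
  | d + 1 => by
    have h1 := stepDown_coeff_add n a j d
    have h2 := stepDown_coeff n a (j + d.succPNat)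
    have e : j + (d + 1).succPNat = (j + d.succPNat) + 1 := by
      rw [← PNat.coe_inj]; simp [PNat.add_coe, Nat.succPNat_coe]; omega
    rw [e]; exact Relation.TransGen.trans h1 h2

theorem stepDown_coeff_lt (n : ℕ) (a : ONote) {j j' : ℕ+} (h : j < j') :
    stepDown n (oadd a j 0) (oadd a j' 0) := by
  have hc : (j : ℕ) < (j' : ℕ) := h
  have e : j' = j + ((j' : ℕ) - (j : ℕ) - 1).succPNat := by
    rw [← PNat.coe_inj]; simp [PNat.add_coe, Nat.succPNat_coe]; omega
  rw [e]; exact stepDown_coeff_add n a j _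

theorem opow_step {n : ℕ} (hn : 1 ≤ n) {x y : ONote} (hy : y ≠ 0) (hx : x = fs y n) :
    stepDown n (oadd x 1 0) (oadd y 1 0) := by
  rcases e : fundamentalSequence y with (_ | y') | f
  · exact absurd (eq_zero_of_fseq e) hy
  · have hx' : x = y' := by rw [hx, fs_some e]
    subst hx'
    have h1 : (1 : ℕ+) < n.succPNat := by
      have : (1 : ℕ) < n + 1 := by omega
      exact this
    exact Relation.TransGen.tail (stepDown_coeff_lt n x h1)
      ⟨oadd_ne_zero, (fs_oadd_one_some e n).symm⟩
  · have hx' : x = f n := by rw [hx, fs_lim e]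
    exact Relation.TransGen.single ⟨oadd_ne_zero, by rw [fs_oadd_one_lim e n, hx']⟩

theorem stepDown_opow {n : ℕ} (hn : 1 ≤ n) {x y : ONote} (h : stepDown n x y) :
    stepDown n (oadd x 1 0) (oadd y 1 0) := by
  have h' : Relation.TransGen (fun x y => y ≠ 0 ∧ x = fs y n) x y := h
  clear h
  induction h' with
  | single hs => exact opow_step hn hs.1 hs.2
  | tail _ hs ih => exact Relation.TransGen.trans ih (opow_step hn hs.1 hs.2)

theorem pnat_cases (m : ℕ+) : m = 1 ∨ ∃ j : ℕ+, m = j + 1 := by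
  rcases e : m.natPred with _ | d
  · left; rw [← PNat.succPNat_natPred m, e]; rfl
  · right
    refine ⟨d.succPNat, ?_⟩
    rw [← PNat.succPNat_natPred m, e, ← PNat.coe_inj]
    simp [PNat.add_coe, Nat.succPNat_coe]

theorem key {k n : ℕ} (hkn : k < n) : ∀ o : ONote, o ≠ 0 →
    fs o k = fs o n ∨ stepDown n (fs o k) (fs o n) := by
  have hn1 : 1 ≤ n := by omega
  have hsp : k.succPNat < n.succPNat := by
    have : k + 1 < n + 1 := by omega
    exact this
  intro o
  induction o with
  | zero => intro h; exact absurd rfl h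
  | oadd a m b iha ihb =>
    intro _
    rcases e : fundamentalSequence b with (_ | b') | f
    · have hb : b = 0 := eq_zero_of_fseq e
      subst hb
      rcases e' : fundamentalSequence a with (_ | a') | g
      · rcases pnat_cases m with rfl | ⟨j, rfl⟩
        · left; rw [fs_oadd_one_none e' k, fs_oadd_one_none e' n]
        · left; rw [fs_oadd_succ_none e' j k, fs_oadd_succ_none e' j n]
      · rcases pnat_cases m with rfl | ⟨j, rfl⟩
        · right; rw [fs_oadd_one_some e' k, fs_oadd_one_some e' n]
          exact stepDown_coeff_lt n a' hsp
        · right; rw [fs_oadd_succ_some e' j k, fs_oadd_succ_some e' j n]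
          exact stepDown_oadd a j n (stepDown_coeff_lt n a' hsp)
      · have ha : a ≠ 0 := by rintro rfl; rw [fseq_zero] at e'; cases e'
        have hfk : fs a k = g k := fs_lim e' k
        have hfn : fs a n = g n := fs_lim e' n
        rcases iha ha with heq | hsd
        · have hg : g k = g n := by rw [← hfk, ← hfn, heq]
          rcases pnat_cases m with rfl | ⟨j, rfl⟩
          · left; rw [fs_oadd_one_lim e' k, fs_oadd_one_lim e' n, hg]
          · left; rw [fs_oadd_succ_lim e' j k, fs_oadd_succ_lim e' j n, hg]
        · have hsd' : stepDown n (g k) (g n) := by rwa [← hfk, ← hfn]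
          rcases pnat_cases m with rfl | ⟨j, rfl⟩
          · right; rw [fs_oadd_one_lim e' k, fs_oadd_one_lim e' n]
            exact stepDown_opow hn1 hsd'
          · right; rw [fs_oadd_succ_lim e' j k, fs_oadd_succ_lim e' j n]
            exact stepDown_oadd a j n (stepDown_opow hn1 hsd')
    · left
      rw [fs_some (a := oadd a m b') (by rw [fseq_oadd, e]),
        fs_some (a := oadd a m b') (by rw [fseq_oadd, e])]
    · have hb : b ≠ 0 := by rintro rfl; rw [fseq_zero] at e; cases e
      rcases ihb hb with heq | hsd
      · left; rw [fs_oadd a m hb, fs_oadd a m hb, heq]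
      · right; rw [fs_oadd a m hb, fs_oadd a m hb]
        exact stepDown_oadd a m n hsd




theorem omega_step {n : ℕ} (hn : 1 ≤ n) : stepDown n (wtower 1) (wtower 2) := by
  have e1 : fundamentalSequence (1 : ONote) = Sum.inl (some 0) := rfl
  have h1 : (1 : ℕ+) < n.succPNat := show (1 : ℕ) < n + 1 by omega
  have hop : stepDown n (oadd (oadd 0 1 0) 1 0) (oadd (oadd 0 n.succPNat 0) 1 0) :=
    stepDown_opow hn (stepDown_coeff_lt n 0 h1)
  have e2 : fundamentalSequence (wtower 1) = Sum.inr (fun i => oadd 0 i.succPNat 0) := by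
    show fundamentalSequence (oadd (1 : ONote) 1 0) = _
    rw [fseq_oadd, fseq_zero, e1]; rfl
  have e3 : fs (wtower 2) n = oadd (oadd 0 n.succPNat 0) 1 0 := by
    show fs (oadd (wtower 1) 1 0) n = _
    rw [fs_oadd_one_lim e2 n]
  exact Relation.TransGen.tail hop ⟨oadd_ne_zero, e3.symm⟩

theorem tower_step {n : ℕ} (hn : 1 ≤ n) : ∀ j : ℕ, stepDown n (wtower (j + 1)) (wtower (j + 2))
  | 0 => omega_step hn
  | j + 1 => stepDown_opow hn (tower_step hn j)

theorem wtower_chain {n : ℕ} (hn : 1 ≤ n) (k : ℕ) :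
    ∀ d : ℕ, stepDown n (wtower (k + 1)) (wtower (k + 1 + d + 1))
  | 0 => tower_step hn k
  | d + 1 => Relation.TransGen.trans (wtower_chain hn k d) (tower_step hn (k + 1 + d))

theorem wtower_lt {k n : ℕ} (h : k < n) : stepDown n (wtower (k + 1)) (wtower (n + 1)) := by
  have hn : 1 ≤ n := by omega
  have hc := wtower_chain hn k (n - k - 1)
  have e : k + 1 + (n - k - 1) + 1 = n + 1 := by omega
  rwa [e] at hc

theorem stepDownE_of {n : ℕ} {x y : ONote} (h : stepDown n x y) :
    stepDownE n (some x) (some y) :=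
  Relation.TransGen.lift some
    (fun _ y' hy => ⟨by simp [hy.1], by rw [hy.2]; rfl⟩) _ _ h

theorem stepE_single {k n : ℕ} (hkn : k < n) {β x : Option ONote}
    (hβ : β ≠ some 0) (hx : x = fsE β k) : stepDownE n x β := by
  cases β with
  | none =>
    subst hx
    exact Relation.TransGen.tail (stepDownE_of (wtower_lt hkn)) ⟨by simp, rfl⟩
  | some b =>
    have hb : b ≠ 0 := fun h => hβ (by rw [h])
    subst hx
    rcases key hkn b hb with heq | hsd
    · exact Relation.TransGen.single ⟨hβ, by show some (fs b k) = _; rw [heq]; rfl⟩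
    · exact Relation.TransGen.tail (stepDownE_of hsd) ⟨hβ, rfl⟩

theorem stmt2' : ∀ (k n : ℕ) (α β : Option ONote), k ≤ n →
    stepDownE k α β → stepDownE n α β := by
  intro k n α β hkn h
  rcases eq_or_lt_of_le hkn with rfl | hlt
  · exact h
  · have h' : Relation.TransGen (fun x y => y ≠ some 0 ∧ x = fsE y k) α β := h
    clear h
    induction h' with
    | single hs => exact stepE_single hlt hs.1 hs.2
    | tail hp hs ih => exact Relation.TransGen.trans ih (stepE_single hlt hs.1 hs.2)

end SlowCon

/-- step-down monotonicity in the parameter (Bachmann property),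
for ordinals ≤ ε₀ (`none` = ε₀). -/
theorem stmt2 : ∀ (k n : ℕ) (α β : Option ONote), k ≤ n →
    SlowCon.stepDownE k α β → SlowCon.stepDownE n α β :=
  SlowCon.stmt2'
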